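/- Let Σ be a Fano fan of rank 3 (i.e., a finite complete nonsingular fan in a rank-3 lattice with deg P > 0 for every primitive collection P) whose Picard number #G(Σ) − 3 is at least 2. Then there exists a primitive collection P ∈ PC(Σ) with #P = 2. -/

import Mathlib

noncomputable section

open Finset

/-- The real vector space `N_ℝ` for the lattice `N = ℤ^d`. -/
abbrev NR (d : ℕ) := Fin d → ℝ

/-- The canonical map from the lattice `N = ℤ^d` to `N_ℝ`. -/
def toNR {d : ℕ} (x : Fin d → ℤ) : NR d := fun i => (x i : ℝ)

/-- The convex cone generated by a set: all finite nonnegative real combinations. -/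
def coneOf {d : ℕ} (S : Set (NR d)) : Set (NR d) :=
  { y | ∃ (n : ℕ) (c : Fin n → ℝ) (v : Fin n → NR d),
      (∀ i, 0 ≤ c i) ∧ (∀ i, v i ∈ S) ∧ y = ∑ i, c i • v i }

/-- `τ` is a face of the cone `σ`, cut out by a linear functional nonnegative on `σ`. -/
def IsFaceOf {d : ℕ} (τ σ : Set (NR d)) : Prop :=
  ∃ u : NR d →ₗ[ℝ] ℝ, (∀ x ∈ σ, 0 ≤ u x) ∧ τ = {x ∈ σ | u x = 0}

/-- A rational polyhedral cone: generated by finitely many lattice points. -/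
def IsRationalPolyhedralCone {d : ℕ} (σ : Set (NR d)) : Prop :=
  ∃ S : Finset (Fin d → ℤ), σ = coneOf (toNR '' (↑S : Set (Fin d → ℤ)))

/-- A pointed (strongly convex) cone. -/
def IsPointedCone {d : ℕ} (σ : Set (NR d)) : Prop :=
  ∀ x ∈ σ, -x ∈ σ → x = 0

/-- A primitive lattice vector. -/
def IsPrimitive {d : ℕ} (x : Fin d → ℤ) : Prop :=
  x ≠ 0 ∧ ∀ (k : ℤ) (y : Fin d → ℤ), x = k • y → k = 1 ∨ k = -1

/-- The dimension of a cone. -/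
def coneDim {d : ℕ} (σ : Set (NR d)) : ℕ :=
  Module.finrank ℝ ↥(Submodule.span ℝ σ)

/-- A (finite) fan in `N = ℤ^d`: a finite collection of rational pointed polyhedral
cones, closed under taking faces, such that the intersection of any two cones is a
face of each. -/
structure Fan (d : ℕ) where
  cones : Set (Set (NR d))
  finite : cones.Finite
  rational : ∀ σ ∈ cones, IsRationalPolyhedralCone σ
  pointed : ∀ σ ∈ cones, IsPointedCone σ
  face_mem : ∀ σ ∈ cones, ∀ τ : Set (NR d), IsFaceOf τ σ → τ ∈ cones
  inter_face : ∀ σ ∈ cones, ∀ τ ∈ cones, IsFaceOf (σ ∩ τ) σ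

namespace Fan

variable {d : ℕ}

/-- A complete fan. -/
def IsComplete (F : Fan d) : Prop := ⋃₀ F.cones = Set.univ

/-- A simplicial fan: every cone is generated by linearly independent vectors. -/
def IsSimplicial (F : Fan d) : Prop :=
  ∀ σ ∈ F.cones, ∃ S : Finset (Fin d → ℤ),
    LinearIndependent ℝ (fun v : ↥(toNR '' (↑S : Set (Fin d → ℤ))) => (v : NR d)) ∧
    σ = coneOf (toNR '' (↑S : Set (Fin d → ℤ)))

/-- A nonsingular fan: every cone is generated by part of a `ℤ`-basis of `N`. -/
def IsNonsingular (F : Fan d) : Prop :=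
  ∀ σ ∈ F.cones, ∃ (b : Module.Basis (Fin d) ℤ (Fin d → ℤ)) (t : Set (Fin d)),
    σ = coneOf (toNR '' (⇑b '' t))

/-- `G(Σ)`: the set of primitive generators of the rays of a fan. -/
def genSet (F : Fan d) : Set (Fin d → ℤ) :=
  { x | IsPrimitive x ∧ coneOf {toNR x} ∈ F.cones }

/-- `G(σ) = σ ∩ G(Σ)`. -/
def coneGens (F : Fan d) (σ : Set (NR d)) : Set (Fin d → ℤ) :=
  { x ∈ F.genSet | toNR x ∈ σ }

/-- A primitive collection of a fan. -/
def IsPrimitiveCollection (F : Fan d) (P : Finset (Fin d → ℤ)) : Prop :=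
  P.Nonempty ∧ (↑P : Set (Fin d → ℤ)) ⊆ F.genSet ∧
    coneOf (toNR '' (↑P : Set (Fin d → ℤ))) ∉ F.cones ∧
    ∀ x ∈ P, coneOf (toNR '' ((↑P : Set (Fin d → ℤ)) \ {x})) ∈ F.cones

/-- `IsPrimRel F P Y a`: `P` is a primitive collection of `F` whose primitive relation is
`∑_{x ∈ P} x = ∑_{y ∈ Y} (a y) • y`, where `Y = G(σ(P))` and `σ(P)` is the unique cone
whose relative interior contains `∑_{x ∈ P} x`, and the coefficients `a y` are positive. -/
def IsPrimRel (F : Fan d) (P Y : Finset (Fin d → ℤ)) (a : (Fin d → ℤ) → ℤ) : Prop :=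
  F.IsPrimitiveCollection P ∧
  ∃ σ ∈ F.cones, (↑Y : Set (Fin d → ℤ)) = F.coneGens σ ∧
    toNR (∑ x ∈ P, x) ∈ intrinsicInterior ℝ σ ∧
    (∀ y ∈ Y, 0 < a y) ∧ (∑ x ∈ P, x) = ∑ y ∈ Y, a y • y

/-- A Fano fan: a finite complete nonsingular fan with `deg P > 0` for every
primitive collection `P` (so its toric variety is a nonsingular toric Fano `d`-fold). -/
def IsFanoFan (F : Fan d) : Prop :=
  F.IsComplete ∧ F.IsNonsingular ∧
    ∀ P Y a, F.IsPrimRel P Y a → ∑ y ∈ Y, a y < (P.card : ℤ)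

/-- The collection of cones of the star subdivision of `F` along `(σ, x)`. -/
def starSub (F : Fan d) (σ : Set (NR d)) (x : Fin d → ℤ) : Set (Set (NR d)) :=
  { τ ∈ F.cones | ¬ IsFaceOf σ τ } ∪
  { ρ | ∃ τ ∈ F.cones, IsFaceOf σ τ ∧ ∃ xi ∈ F.coneGens σ,
      IsFaceOf ρ (coneOf (toNR ''
        (insert x ((F.coneGens τ \ F.coneGens σ) ∪ (F.coneGens σ \ {xi}))))) }

/-- `F'` is the star subdivision of `F` along `(σ, x)`. -/
def IsStarSubdivisionOf (F' F : Fan d) (σ : Set (NR d)) (x : Fin d → ℤ) : Prop :=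
  F'.cones = F.starSub σ x

/-- `F'` is an equivariant blow-up of `F`: the star subdivision along a cone `σ` (with at
least two generators) and the sum of the elements of `G(σ)`. -/
def IsBlowupOf (F' F : Fan d) : Prop :=
  ∃ σ ∈ F.cones, ∃ S : Finset (Fin d → ℤ),
    (↑S : Set (Fin d → ℤ)) = F.coneGens σ ∧ 2 ≤ S.card ∧
    F'.IsStarSubdivisionOf F σ (∑ y ∈ S, y)

/-- One step of F-equivalence: an equivariant blow-up or blow-down between Fano fans. -/
def FStep (F G : Fan d) : Prop :=
  F.IsFanoFan ∧ G.IsFanoFan ∧ (G.IsBlowupOf F ∨ F.IsBlowupOf G)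

/-- F-equivalence of Fano fans. -/
def FEquiv : Fan d → Fan d → Prop := Relation.ReflTransGen FStep

/-- A splitting fan: any two distinct primitive collections are disjoint. -/
def IsSplittingFan (F : Fan d) : Prop :=
  F.IsComplete ∧ F.IsNonsingular ∧
    ∀ P Q, F.IsPrimitiveCollection P → F.IsPrimitiveCollection Q → P ≠ Q →
      ∀ x ∈ P, x ∉ Q

/-- Data of a wall relation: `τ` is a wall (a `(d-1)`-dimensional cone) with
`G(τ) = Z`, `z_d = zd`, `z_{d+1} = zd1` the generators of the two maximal cones
containing `τ`, and `∑_{z ∈ Z} (b z) • z + zd + zd1 = 0`.  The anticanonical degree of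
the corresponding invariant curve is `∑_{z ∈ Z} b z + 2`. -/
def IsWallRel (F : Fan d) (τ : Set (NR d)) (Z : Finset (Fin d → ℤ))
    (zd zd1 : Fin d → ℤ) (b : (Fin d → ℤ) → ℤ) : Prop :=
  τ ∈ F.cones ∧ coneDim τ = d - 1 ∧ (↑Z : Set (Fin d → ℤ)) = F.coneGens τ ∧
    zd ∈ F.genSet ∧ zd1 ∈ F.genSet ∧ zd ≠ zd1 ∧ zd ∉ Z ∧ zd1 ∉ Z ∧
    coneOf (toNR '' (insert zd (↑Z : Set (Fin d → ℤ)))) ∈ F.cones ∧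
    coneOf (toNR '' (insert zd1 (↑Z : Set (Fin d → ℤ)))) ∈ F.cones ∧
    (∑ z ∈ Z, b z • z) + zd + zd1 = 0

end Fan

/-- The fan of a product of projective spaces `P^{a 0} × ⋯ × P^{a (r-1)}`. -/
def IsProdProjFan {d r : ℕ} (F : Fan d) (a : Fin r → ℕ) : Prop :=
  ∃ e : (j : Fin r) → Fin (a j + 1) → (Fin d → ℤ),
    (∀ j, ∑ i, e j i = 0) ∧
    (∃ b : Module.Basis ((j : Fin r) × Fin (a j)) ℤ (Fin d → ℤ),
       ∀ (j : Fin r) (i : Fin (a j)), e j i.castSucc = b ⟨j, i⟩) ∧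
    F.cones = { σ | ∃ s : (j : Fin r) → Finset (Fin (a j + 1)),
        (∀ j, s j ≠ Finset.univ) ∧
        σ = coneOf (toNR '' (⋃ j, (e j) '' (↑(s j) : Set (Fin (a j + 1))))) }

/-- The fan of the projective space `P^d`. -/
def IsProjFan {d : ℕ} (F : Fan d) : Prop := IsProdProjFan F (fun _ : Fin 1 => d)

/-- The lattice points of `N_ℝ`. -/
def latticePts (d : ℕ) : Set (NR d) := Set.range (toNR (d := d))

/-- `F` is, up to a unimodular identification, the product of the fans `F₁` and `F₂`. -/
def IsProductOf {d d₁ d₂ : ℕ} (F : Fan d) (F₁ : Fan d₁) (F₂ : Fan d₂) : Prop :=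
  ∃ φ : NR d ≃ₗ[ℝ] NR d₁ × NR d₂,
    (⇑φ '' latticePts d = (latticePts d₁) ×ˢ (latticePts d₂)) ∧
    F.cones = { σ | ∃ σ₁ ∈ F₁.cones, ∃ σ₂ ∈ F₂.cones, ⇑φ '' σ = σ₁ ×ˢ σ₂ }

/-- `δ` is a nonempty proper face of the polytope `Δ`. -/
def IsProperPolytopeFace {d : ℕ} (δ Δ : Set (NR d)) : Prop :=
  δ.Nonempty ∧ δ ≠ Δ ∧ ∃ (u : NR d →ₗ[ℝ] ℝ) (c : ℝ),
    (∀ x ∈ Δ, u x ≤ c) ∧ δ = {x ∈ Δ | u x = c}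

/-- The collection of cones over the proper faces of the polytope `Conv(V)`
(together with the zero cone). -/
def polytopeFaceFan {d : ℕ} (V : Set (NR d)) : Set (Set (NR d)) :=
  insert ({0} : Set (NR d))
    { σ | ∃ δ : Set (NR d), IsProperPolytopeFace δ (convexHull ℝ V) ∧ σ = coneOf δ }

/-- The four-dimensional del Pezzo fan `V⁴` (up to unimodular equivalence). -/
def IsDelPezzoFan4 (F : Fan 4) : Prop :=
  ∃ b : Module.Basis (Fin 4) ℤ (Fin 4 → ℤ),
    F.cones = polytopeFaceFan (toNR ''
      ((Set.range ⇑b) ∪ (Set.range fun i => -b i) ∪ {(∑ i, b i), -(∑ i, b i)}))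

/-- The four-dimensional pseudo del Pezzo fan `Ṽ⁴` (up to unimodular equivalence). -/
def IsPseudoDelPezzoFan4 (F : Fan 4) : Prop :=
  ∃ b : Module.Basis (Fin 4) ℤ (Fin 4 → ℤ),
    F.cones = polytopeFaceFan (toNR ''
      ((Set.range ⇑b) ∪ (Set.range fun i => -b i) ∪ {∑ i, b i}))

/-- An equivariant blow-up of a 3-dimensional fan at an invariant point: star subdivision
along a 3-dimensional cone and the sum of its three generators. -/
def PointBlowup3 (F' F : Fan 3) : Prop :=
  ∃ σ ∈ F.cones, ∃ S : Finset (Fin 3 → ℤ),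
    (↑S : Set (Fin 3 → ℤ)) = F.coneGens σ ∧ S.card = 3 ∧
    F'.IsStarSubdivisionOf F σ (∑ y ∈ S, y)

/-- An equivariant blow-up of a 3-dimensional fan along an invariant curve: star
subdivision along a 2-dimensional cone and the sum of its two generators. -/
def CurveBlowup3 (F' F : Fan 3) : Prop :=
  ∃ σ ∈ F.cones, ∃ S : Finset (Fin 3 → ℤ),
    (↑S : Set (Fin 3 → ℤ)) = F.coneGens σ ∧ S.card = 2 ∧
    F'.IsStarSubdivisionOf F σ (∑ y ∈ S, y)

-- § toNR basics
lemma toNR_inj {d : ℕ} : Function.Injective (toNR (d := d)) := by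
  intro x y h
  funext i
  have : ((x i : ℝ)) = (y i : ℝ) := congrFun h i
  exact_mod_cast this

@[simp] lemma toNR_eq_zero {d : ℕ} {x : Fin d → ℤ} : toNR x = 0 ↔ x = 0 := by
  constructor
  · intro h; funext i
    have : ((x i : ℝ)) = 0 := congrFun h i
    exact_mod_cast this
  · rintro rfl; funext i; simp [toNR]

-- § coneOf basics
lemma mem_coneOf_of_mem {d : ℕ} {S : Set (NR d)} {x : NR d} (hx : x ∈ S) : x ∈ coneOf S := by
  refine ⟨1, fun _ => 1, fun _ => x, fun _ => zero_le_one, fun _ => hx, by simp⟩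

lemma smul_mem_coneOf {d : ℕ} {S : Set (NR d)} {x : NR d} {r : ℝ} (hr : 0 ≤ r)
    (hx : x ∈ coneOf S) : r • x ∈ coneOf S := by
  obtain ⟨n, c, v, hc, hv, rfl⟩ := hx
  exact ⟨n, fun i => r * c i, v, fun i => mul_nonneg hr (hc i), hv, by
    rw [Finset.smul_sum]; exact Finset.sum_congr rfl fun i _ => by
      show r • c i • v i = (r * c i) • v i
      rw [smul_smul]⟩

lemma smul_mem_coneOf_of_mem {d : ℕ} {S : Set (NR d)} {x : NR d} {r : ℝ} (hr : 0 ≤ r)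
    (hx : x ∈ S) : r • x ∈ coneOf S :=
  smul_mem_coneOf hr (mem_coneOf_of_mem hx)

lemma pair_mem_coneOf {d : ℕ} {x y : NR d} {α β : ℝ} (hα : 0 ≤ α) (hβ : 0 ≤ β) :
    α • x + β • y ∈ coneOf {x, y} := by
  refine ⟨2, ![α, β], ![x, y], ?_, ?_, ?_⟩
  · intro i; fin_cases i <;> simpa
  · intro i; fin_cases i <;> simp
  · simp [Fin.sum_univ_two]

lemma triple_mem_coneOf {d : ℕ} {x y z : NR d} {α β γ : ℝ} (hα : 0 ≤ α) (hβ : 0 ≤ β)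
    (hγ : 0 ≤ γ) : α • x + β • y + γ • z ∈ coneOf {x, y, z} := by
  refine ⟨3, ![α, β, γ], ![x, y, z], ?_, ?_, ?_⟩
  · intro i; fin_cases i <;> simpa
  · intro i; fin_cases i <;> simp
  · simp [Fin.sum_univ_three, add_assoc]

lemma mem_coneOf_finite_elim {d : ℕ} {S : Set (NR d)} (hS : S.Finite) {z : NR d}
    (hz : z ∈ coneOf S) :
    ∃ c : NR d → ℝ, (∀ v, 0 ≤ c v) ∧ z = ∑ v ∈ hS.toFinset, c v • v := by
  classical
  obtain ⟨n, c, v, hc, hv, rfl⟩ := hz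
  refine ⟨fun w => ∑ i ∈ Finset.univ.filter (fun i => v i = w), c i, ?_, ?_⟩
  · intro w; exact Finset.sum_nonneg fun i _ => hc i
  · rw [← Finset.sum_fiberwise_of_maps_to (g := v) (t := hS.toFinset)
      (fun i _ => hS.mem_toFinset.2 (hv i)) (fun i => c i • v i)]
    refine Finset.sum_congr rfl fun w _ => ?_
    rw [Finset.sum_smul]
    refine Finset.sum_congr rfl fun i hi => ?_
    rw [(Finset.mem_filter.1 hi).2]

lemma mem_coneOf_pair_elim {d : ℕ} {x y z : NR d} (hz : z ∈ coneOf {x, y}) :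
    ∃ α β : ℝ, 0 ≤ α ∧ 0 ≤ β ∧ z = α • x + β • y := by
  classical
  obtain ⟨n, c, v, hc, hv, rfl⟩ := hz
  refine ⟨∑ i ∈ Finset.univ.filter (fun i => v i = x), c i,
    ∑ i ∈ Finset.univ.filter (fun i => ¬ v i = x), c i,
    Finset.sum_nonneg fun i _ => hc i, Finset.sum_nonneg fun i _ => hc i, ?_⟩
  rw [← Finset.sum_filter_add_sum_filter_not Finset.univ (fun i => v i = x)
    (fun i => c i • v i), Finset.sum_smul, Finset.sum_smul]
  congr 1
  · exact Finset.sum_congr rfl fun i hi => by rw [(Finset.mem_filter.1 hi).2]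
  · refine Finset.sum_congr rfl fun i hi => ?_
    have h1 := hv i
    have h2 := (Finset.mem_filter.1 hi).2
    rcases h1 with h | h
    · exact absurd h h2
    · rw [h]

lemma mem_coneOf_singleton_elim {d : ℕ} {x z : NR d} (hz : z ∈ coneOf {x}) :
    ∃ r : ℝ, 0 ≤ r ∧ z = r • x := by
  obtain ⟨n, c, v, hc, hv, rfl⟩ := hz
  refine ⟨∑ i, c i, Finset.sum_nonneg fun i _ => hc i, ?_⟩
  rw [Finset.sum_smul]
  exact Finset.sum_congr rfl fun i _ => by rw [hv i]

-- § primitivity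
lemma IsPrimitive.ne_zero' {d : ℕ} {x : Fin d → ℤ} (hx : IsPrimitive x) : toNR x ≠ 0 := by
  simpa using hx.1

lemma prim_eq_of_pos_smul {d : ℕ} {x y : Fin d → ℤ} (hx : IsPrimitive x) (hy : IsPrimitive y)
    {μ : ℝ} (hμ : 0 < μ) (h : toNR y = μ • toNR x) : y = x := by
  have hco : ∀ j, (y j : ℝ) = μ * (x j : ℝ) := fun j => congrFun h j
  -- pick a coordinate where x is nonzero
  obtain ⟨j0, hj0⟩ : ∃ j, x j ≠ 0 := by
    by_contra hcon
    push_neg at hcon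
    exact hx.1 (funext hcon)
  -- cross identities over ℤ
  have hcross : ∀ j, y j * x j0 = y j0 * x j := by
    intro j
    have : (y j : ℝ) * (x j0 : ℝ) = (y j0 : ℝ) * (x j : ℝ) := by
      rw [hco j, hco j0]; ring
    exact_mod_cast this
  set p : ℤ := y j0 with hp
  set q : ℤ := x j0 with hq
  have hg : (0 : ℕ) < Int.gcd p q := by
    rw [Int.gcd_pos_iff]; right; exact hj0
  set g : ℤ := (Int.gcd p q : ℤ) with hgdef
  have hgne : g ≠ 0 := by
    simp only [hgdef]
    exact_mod_cast Nat.pos_iff_ne_zero.mp hg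
  set p1 : ℤ := p / g with hp1
  set q1 : ℤ := q / g with hq1
  have hgp : g ∣ p := Int.gcd_dvd_left p q
  have hgq : g ∣ q := Int.gcd_dvd_right p q
  have hcop : IsCoprime p1 q1 := by
    rw [Int.isCoprime_iff_gcd_eq_one]
    exact Int.gcd_div_gcd_div_gcd hg
  have key : ∀ j, y j * q1 = p1 * x j := by
    intro j
    have h1 : y j * q = p * x j := hcross j
    have hpp : p = g * p1 := (Int.mul_ediv_cancel' hgp).symm
    have hqq : q = g * q1 := (Int.mul_ediv_cancel' hgq).symm
    have h2 : y j * (g * q1) = (g * p1) * x j := by rw [← hqq, ← hpp]; exact h1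
    have h3 : g * (y j * q1) = g * (p1 * x j) := by linarith [h2, mul_comm (y j) (g*q1)] <;> ring_nf
    exact mul_left_cancel₀ hgne h3
  -- q1 divides every x j
  have hq1dvd : ∀ j, q1 ∣ x j := by
    intro j
    have : q1 ∣ p1 * x j := ⟨y j, by rw [← key j]; ring⟩
    exact (IsCoprime.dvd_of_dvd_mul_left hcop.symm this)
  have hq1u : q1 = 1 ∨ q1 = -1 := by
    refine hx.2 q1 (fun j => x j / q1) ?_
    funext j
    have := Int.mul_ediv_cancel' (hq1dvd j)
    simpa [Pi.smul_apply, smul_eq_mul] using this.symm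
  have hp1dvd : ∀ j, p1 ∣ y j := by
    intro j
    have : p1 ∣ y j * q1 := ⟨x j, key j⟩
    exact (IsCoprime.dvd_of_dvd_mul_right hcop this)
  have hp1u : p1 = 1 ∨ p1 = -1 := by
    refine hy.2 p1 (fun j => y j / p1) ?_
    funext j
    have := Int.mul_ediv_cancel' (hp1dvd j)
    simpa [Pi.smul_apply, smul_eq_mul] using this.symm
  -- sign analysis
  have hpqpos : 0 < p * q := by
    have : (p : ℝ) * q = μ * (q : ℝ) ^ 2 := by
      rw [hp, hq]
      rw [hco j0]; ring
    have hqR : (q : ℝ) ≠ 0 := by exact_mod_cast hj0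
    have : (0 : ℝ) < p * q := by
      rw [this]
      positivity
    exact_mod_cast this
  have hp1q1 : 0 < p1 * q1 := by
    have hpp : p = g * p1 := (Int.mul_ediv_cancel' hgp).symm
    have hqq : q = g * q1 := (Int.mul_ediv_cancel' hgq).symm
    have : 0 < (g * g) * (p1 * q1) := by
      have : p * q = (g * g) * (p1 * q1) := by rw [hpp, hqq]; ring
      linarith [hpqpos, this ▸ hpqpos]
    nlinarith [sq_nonneg g, this]
  have heq : p1 = q1 := by
    rcases hp1u with h1 | h1 <;> rcases hq1u with h2 | h2 <;> simp [h1, h2] at hp1q1 ⊢ <;> omega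
  have hq1ne : q1 ≠ 0 := by
    rcases hq1u with h | h <;> simp [h]
  funext j
  have := key j
  rw [heq] at this
  have : q1 * y j = q1 * x j := by linarith [this]
  exact mul_left_cancel₀ hq1ne this

lemma basis_isPrimitive {d : ℕ} (b : Module.Basis (Fin d) ℤ (Fin d → ℤ)) (i : Fin d) :
    IsPrimitive (b i) := by
  constructor
  · exact b.ne_zero i
  · intro k y hky
    have h1 : b.coord i (b i) = 1 := by simp [Module.Basis.coord_apply]
    have h2 : b.coord i (b i) = k * b.coord i y := by
      rw [hky, map_zsmul, smul_eq_mul]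
    have : k * b.coord i y = 1 := by rw [← h2, h1]
    have : IsUnit k := IsUnit.of_mul_eq_one _ this
    exact Int.isUnit_iff.1 this
-- § Fan basics
namespace Fan
variable {d : ℕ} (F : Fan d)

lemma smul_mem_cone {σ : Set (NR d)} (hσ : σ ∈ F.cones) {x : NR d} (hx : x ∈ σ) {r : ℝ}
    (hr : 0 ≤ r) : r • x ∈ σ := by
  obtain ⟨S, rfl⟩ := F.rational σ hσ
  exact smul_mem_coneOf hr hx

/-- If the hat of a generator lies in a 2‑generator cone of the fan, it is one of the two
generators. -/
lemma eq_gen_of_mem_pair {r s v : Fin d → ℤ} (hr : r ∈ F.genSet) (hs : s ∈ F.genSet)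
    (hv : v ∈ F.genSet) (hC : coneOf {toNR r, toNR s} ∈ F.cones)
    (hmem : toNR v ∈ coneOf {toNR r, toNR s}) : v = r ∨ v = s := by
  have hray : coneOf {toNR v} ∈ F.cones := hv.2
  have hsub : coneOf {toNR v} ⊆ coneOf {toNR r, toNR s} := by
    intro z hz
    obtain ⟨ρ, hρ, rfl⟩ := mem_coneOf_singleton_elim hz
    exact smul_mem_coneOf hρ hmem
  have hface : IsFaceOf (coneOf {toNR v}) (coneOf {toNR r, toNR s}) := by
    have := F.inter_face _ hC _ hray
    rwa [Set.inter_eq_self_of_subset_right hsub] at this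
  obtain ⟨u, hu, heq⟩ := hface
  have hvray : toNR v ∈ coneOf {toNR v} := mem_coneOf_of_mem rfl
  have huv : u (toNR v) = 0 := by
    have := heq ▸ hvray
    exact this.2
  obtain ⟨α, β, hα, hβ, hrep⟩ := mem_coneOf_pair_elim hmem
  have hur : 0 ≤ u (toNR r) := hu _ (mem_coneOf_of_mem (by simp))
  have hus : 0 ≤ u (toNR s) := hu _ (mem_coneOf_of_mem (by simp))
  have hsum : α * u (toNR r) + β * u (toNR s) = 0 := by
    have : u (toNR v) = α * u (toNR r) + β * u (toNR s) := by
      rw [hrep, map_add, map_smul, map_smul]; rfl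
    linarith [this, huv]
  have hvne : toNR v ≠ 0 := hv.1.ne_zero'
  have hcase : 0 < α ∨ 0 < β := by
    by_contra hcon
    push_neg at hcon
    have hα0 : α = 0 := le_antisymm (hcon.1) hα
    have hβ0 : β = 0 := le_antisymm (hcon.2) hβ
    apply hvne
    rw [hrep, hα0, hβ0, zero_smul, zero_smul, add_zero]
  have hterm : α * u (toNR r) = 0 ∧ β * u (toNR s) = 0 := by
    constructor <;> nlinarith [mul_nonneg hα hur, mul_nonneg hβ hus]
  rcases hcase with hα' | hβ'
  · left
    have hur0 : u (toNR r) = 0 := (mul_eq_zero.1 hterm.1).resolve_left hα'.ne'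
    have hrmem : toNR r ∈ coneOf {toNR v} := by
      rw [heq]
      exact ⟨mem_coneOf_of_mem (by simp), hur0⟩
    obtain ⟨ρ, hρ, hρeq⟩ := mem_coneOf_singleton_elim hrmem
    have hρpos : 0 < ρ := by
      rcases hρ.lt_or_eq with h | h
      · exact h
      · exfalso; apply hr.1.ne_zero'; rw [hρeq, ← h, zero_smul]
    exact (prim_eq_of_pos_smul hv.1 hr.1 hρpos hρeq).symm
  · right
    have hus0 : u (toNR s) = 0 := (mul_eq_zero.1 hterm.2).resolve_left hβ'.ne'
    have hsmem : toNR s ∈ coneOf {toNR v} := by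
      rw [heq]
      exact ⟨mem_coneOf_of_mem (by simp), hus0⟩
    obtain ⟨ρ, hρ, hρeq⟩ := mem_coneOf_singleton_elim hsmem
    have hρpos : 0 < ρ := by
      rcases hρ.lt_or_eq with h | h
      · exact h
      · exfalso; apply hs.1.ne_zero'; rw [hρeq, ← h, zero_smul]
    exact (prim_eq_of_pos_smul hv.1 hs.1 hρpos hρeq).symm

/-- Crossing lemma: two 2-generator cones on disjoint generator pairs cannot share a
nonzero point. -/
lemma crossing {p q r s : Fin d → ℤ} (hp : p ∈ F.genSet) (hq : q ∈ F.genSet)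
    (hr : r ∈ F.genSet) (hs : s ∈ F.genSet)
    (hC1 : coneOf {toNR p, toNR q} ∈ F.cones) (hC2 : coneOf {toNR r, toNR s} ∈ F.cones)
    (hpr : p ≠ r) (hps : p ≠ s) (hqr : q ≠ r) (hqs : q ≠ s) {z : NR d}
    (hz1 : z ∈ coneOf {toNR p, toNR q}) (hz2 : z ∈ coneOf {toNR r, toNR s}) (hz0 : z ≠ 0) :
    False := by
  obtain ⟨u, hu, heq⟩ := F.inter_face _ hC1 _ hC2
  have hzf : z ∈ coneOf {toNR p, toNR q} ∩ coneOf {toNR r, toNR s} := ⟨hz1, hz2⟩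
  have huz : u z = 0 := (heq ▸ hzf).2
  obtain ⟨α, β, hα, hβ, hrep⟩ := mem_coneOf_pair_elim hz1
  have hup : 0 ≤ u (toNR p) := hu _ (mem_coneOf_of_mem (by simp))
  have huq : 0 ≤ u (toNR q) := hu _ (mem_coneOf_of_mem (by simp))
  have hsum : α * u (toNR p) + β * u (toNR q) = 0 := by
    have : u z = α * u (toNR p) + β * u (toNR q) := by
      rw [hrep, map_add, map_smul, map_smul]; rfl
    linarith [this, huz]
  have hcase : 0 < α ∨ 0 < β := by
    by_contra hcon
    push_neg at hcon
    apply hz0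
    rw [hrep, le_antisymm hcon.1 hα, le_antisymm hcon.2 hβ, zero_smul, zero_smul, add_zero]
  have hterm : α * u (toNR p) = 0 ∧ β * u (toNR q) = 0 := by
    constructor <;> nlinarith [mul_nonneg hα hup, mul_nonneg hβ huq]
  rcases hcase with hα' | hβ'
  · have hup0 : u (toNR p) = 0 := (mul_eq_zero.1 hterm.1).resolve_left hα'.ne'
    have : toNR p ∈ coneOf {toNR p, toNR q} ∩ coneOf {toNR r, toNR s} := by
      have hmm : toNR p ∈ {x | x ∈ coneOf {toNR p, toNR q} ∧ u x = 0} :=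
        ⟨mem_coneOf_of_mem (by simp), hup0⟩
      rwa [← heq] at hmm
    rcases F.eq_gen_of_mem_pair hr hs hp hC2 this.2 with h | h
    · exact hpr h
    · exact hps h
  · have huq0 : u (toNR q) = 0 := (mul_eq_zero.1 hterm.2).resolve_left hβ'.ne'
    have : toNR q ∈ coneOf {toNR p, toNR q} ∩ coneOf {toNR r, toNR s} := by
      have hmm : toNR q ∈ {x | x ∈ coneOf {toNR p, toNR q} ∧ u x = 0} :=
        ⟨mem_coneOf_of_mem (by simp), huq0⟩
      rwa [← heq] at hmm
    rcases F.eq_gen_of_mem_pair hr hs hq hC2 this.2 with h | h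
    · exact hqr h
    · exact hqs h

end Fan
-- § nonsingular cones: rays of generators are faces
lemma toNR_repr_sum {d : ℕ} (b : Module.Basis (Fin d) ℤ (Fin d → ℤ)) (m : Fin d → ℤ) :
    toNR m = ∑ j, ((b.repr m j : ℤ) : ℝ) • toNR (b j) := by
  funext k
  have h2 : m k = ∑ j, b.repr m j * b j k := by
    have := congrFun (b.sum_repr m) k
    simpa [Finset.sum_apply, Pi.smul_apply, smul_eq_mul] using this.symm
  have : ((m k : ℤ) : ℝ) = ((∑ j, b.repr m j * b j k : ℤ) : ℝ) := by exact_mod_cast h2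
  calc (toNR m) k = ((m k : ℤ) : ℝ) := rfl
    _ = ((∑ j, b.repr m j * b j k : ℤ) : ℝ) := this
    _ = ∑ j, ((b.repr m j : ℤ) : ℝ) * ((b j k : ℤ) : ℝ) := by push_cast; ring
    _ = (∑ j, ((b.repr m j : ℤ) : ℝ) • toNR (b j)) k := by
        simp [Finset.sum_apply, toNR]

lemma span_toNR_basis {d : ℕ} (b : Module.Basis (Fin d) ℤ (Fin d → ℤ)) :
    ⊤ ≤ Submodule.span ℝ (Set.range fun j => toNR (b j)) := by
  intro x _
  have hsingle : ∀ k : Fin d, toNR (Pi.single k (1:ℤ)) ∈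
      Submodule.span ℝ (Set.range fun j => toNR (b j)) := by
    intro k
    rw [toNR_repr_sum b]
    exact Submodule.sum_mem _ fun j _ =>
      Submodule.smul_mem _ _ (Submodule.subset_span ⟨j, rfl⟩)
  have hx : x = ∑ k, x k • toNR (Pi.single k (1:ℤ)) := by
    funext j
    have : ∀ k : Fin d, (toNR (Pi.single k (1:ℤ))) j = if j = k then (1:ℝ) else 0 := by
      intro k
      simp only [toNR, Pi.single_apply]
      split <;> simp
    simp only [Finset.sum_apply, Pi.smul_apply, smul_eq_mul, this, mul_ite, mul_one, mul_zero]
    rw [Finset.sum_ite_eq Finset.univ j (fun k => x k)]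
    simp
  rw [hx]
  exact Submodule.sum_mem _ fun k _ => Submodule.smul_mem _ _ (hsingle k)

section RayFace
variable {d : ℕ} (b : Module.Basis (Fin d) ℤ (Fin d → ℤ)) (t : Set (Fin d))

lemma image_toNR_b_eq : toNR '' (⇑b '' t) = (fun j => toNR (b j)) '' t := by
  rw [Set.image_image]

lemma Bv_inj : Function.Injective (fun j => toNR (b j)) :=
  toNR_inj.comp b.injective

lemma toFinset_image_eq (hS : (toNR '' (⇑b '' t)).Finite) :
    hS.toFinset = ((Set.toFinite t).toFinset).image (fun j => toNR (b j)) := by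
  ext w
  simp only [Set.Finite.mem_toFinset, Finset.mem_image, Set.Finite.mem_toFinset]
  rw [image_toNR_b_eq]
  constructor
  · rintro ⟨j, hj, rfl⟩; exact ⟨j, hj, rfl⟩
  · rintro ⟨j, hj, rfl⟩; exact ⟨j, hj, rfl⟩

lemma ray_isFaceOf_nonsingular {i : Fin d} (hi : i ∈ t) :
    IsFaceOf (coneOf {toNR (b i)}) (coneOf (toNR '' (⇑b '' t))) := by
  classical
  set Bv : Fin d → NR d := fun j => toNR (b j) with hBv
  set BR : Module.Basis (Fin d) ℝ (NR d) :=
    basisOfTopLeSpanOfCardEqFinrank Bv (span_toNR_basis b) (by simp) with hBRdef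
  have hBR : ∀ j, BR j = Bv j := fun j =>
    congrFun (coe_basisOfTopLeSpanOfCardEqFinrank Bv (span_toNR_basis b) (by simp)) j
  set tf : Finset (Fin d) := (Set.toFinite t).toFinset with htf
  have htfmem : ∀ j, j ∈ tf ↔ j ∈ t := fun j => Set.Finite.mem_toFinset _
  set u : NR d →ₗ[ℝ] ℝ := ∑ j ∈ tf.erase i, BR.coord j with hu
  have hueval : ∀ j, u (Bv j) = if j ∈ tf.erase i then 1 else 0 := by
    intro j
    rw [hu, LinearMap.sum_apply]
    have : ∀ j' ∈ tf.erase i, BR.coord j' (Bv j) = if j' = j then 1 else 0 := by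
      intro j' _
      rw [← hBR j, Module.Basis.coord_apply, Module.Basis.repr_self_apply]
      simp [eq_comm]
    rw [Finset.sum_congr rfl this, Finset.sum_ite_eq' (tf.erase i) j (fun _ => (1:ℝ))]
  set S : Set (NR d) := toNR '' (⇑b '' t) with hS
  have hSfin : S.Finite := ((Set.toFinite t).image _).image _
  have hTimg : hSfin.toFinset = tf.image Bv := toFinset_image_eq b t hSfin
  have hmemS : Bv i ∈ S := by
    rw [hS, image_toNR_b_eq]
    exact ⟨i, hi, rfl⟩
  have hrep : ∀ z ∈ coneOf S, ∃ c : NR d → ℝ, (∀ v, 0 ≤ c v) ∧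
      z = ∑ j ∈ tf, c (Bv j) • Bv j := by
    intro z hz
    obtain ⟨c, hc, hzeq⟩ := mem_coneOf_finite_elim hSfin hz
    refine ⟨c, hc, ?_⟩
    rw [hzeq, hTimg, Finset.sum_image (fun x _ y _ h => Bv_inj b h)]
  have hnonneg : ∀ x ∈ coneOf S, 0 ≤ u x := by
    intro x hx
    obtain ⟨c, hc, rfl⟩ := hrep x hx
    rw [map_sum]
    refine Finset.sum_nonneg fun j _ => ?_
    rw [map_smul, smul_eq_mul, hueval j]
    split <;> simp [hc (Bv j)] <;> positivity
  refine ⟨u, hnonneg, ?_⟩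
  ext z
  constructor
  · intro hz
    obtain ⟨r, hr, rfl⟩ := mem_coneOf_singleton_elim hz
    refine ⟨smul_mem_coneOf_of_mem hr hmemS, ?_⟩
    rw [map_smul, smul_eq_mul]
    have : u (Bv i) = 0 := by
      rw [hueval i]
      simp
    rw [show u (toNR (b i)) = u (Bv i) from rfl, this, mul_zero]
  · rintro ⟨hzσ, hzu⟩
    obtain ⟨c, hc, hzeq⟩ := hrep z hzσ
    have husum : ∑ j ∈ tf.erase i, c (Bv j) = 0 := by
      have : u z = ∑ j ∈ tf, c (Bv j) * (if j ∈ tf.erase i then 1 else 0) := by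
        rw [hzeq, map_sum]
        exact Finset.sum_congr rfl fun j _ => by rw [map_smul, smul_eq_mul, hueval j]
      rw [hzu] at this
      have h2 : (0:ℝ) = ∑ j ∈ tf, (if j ∈ tf.erase i then c (Bv j) else 0) :=
        this.trans (Finset.sum_congr rfl fun j _ => by rw [mul_ite, mul_one, mul_zero])
      rw [Finset.sum_ite_mem, Finset.inter_eq_right.2 (Finset.erase_subset i tf)] at h2
      exact h2.symm
    have hzero : ∀ j ∈ tf.erase i, c (Bv j) = 0 :=
      (Finset.sum_eq_zero_iff_of_nonneg fun j _ => hc (Bv j)).1 husum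
    have hitf : i ∈ tf := (htfmem i).2 hi
    have : z = c (Bv i) • Bv i := by
      rw [hzeq, ← Finset.add_sum_erase tf _ hitf]
      rw [Finset.sum_eq_zero fun j hj => by rw [hzero j hj, zero_smul], add_zero]
    rw [this]
    exact smul_mem_coneOf_of_mem (hc (Bv i)) rfl

end RayFace

namespace Fan

lemma basis_gen_mem_genSet {d : ℕ} (F : Fan d) {b : Module.Basis (Fin d) ℤ (Fin d → ℤ)}
    {t : Set (Fin d)} (hσ : coneOf (toNR '' (⇑b '' t)) ∈ F.cones) {i : Fin d} (hi : i ∈ t) :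
    b i ∈ F.genSet :=
  ⟨basis_isPrimitive b i, F.face_mem _ hσ _ (ray_isFaceOf_nonsingular b t hi)⟩

/-- Every point of `N_ℝ` is a nonnegative combination of generators of a complete
nonsingular fan. -/
lemma gen_rep {d : ℕ} (F : Fan d) (hC : F.IsComplete) (hN : F.IsNonsingular) (x : NR d) :
    ∃ (s : Finset (Fin d → ℤ)) (c : (Fin d → ℤ) → ℝ), (↑s : Set (Fin d → ℤ)) ⊆ F.genSet ∧
      (∀ g, 0 ≤ c g) ∧ x = ∑ g ∈ s, c g • toNR g := by
  classical
  have hx : x ∈ ⋃₀ F.cones := by rw [hC]; trivial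
  obtain ⟨σ, hσ, hxσ⟩ := hx
  obtain ⟨b, t, rfl⟩ := hN σ hσ
  set Bv : Fin d → NR d := fun j => toNR (b j) with hBv
  set tf : Finset (Fin d) := (Set.toFinite t).toFinset with htf
  have hSfin : (toNR '' (⇑b '' t)).Finite := ((Set.toFinite t).image _).image _
  obtain ⟨c, hc, hxeq⟩ := mem_coneOf_finite_elim hSfin hxσ
  have hTimg : hSfin.toFinset = tf.image Bv := toFinset_image_eq b t hSfin
  refine ⟨tf.image b, fun g => c (toNR g), ?_, fun g => hc _, ?_⟩
  · intro g hg
    simp only [Finset.coe_image, Set.mem_image] at hg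
    obtain ⟨j, hj, rfl⟩ := hg
    have hjt : j ∈ t := (Set.Finite.mem_toFinset _).1 hj
    exact F.basis_gen_mem_genSet hσ hjt
  · rw [hxeq, hTimg, Finset.sum_image (fun x _ y _ h => Bv_inj b h),
      Finset.sum_image (fun x _ y _ h => b.injective h)]

end Fan
-- § a linear functional vanishing exactly on the span of an independent pair
lemma exists_ker_functional {a b : NR 3} (hab : LinearIndependent ℝ ![a, b]) :
    ∃ u : NR 3 →ₗ[ℝ] ℝ, u a = 0 ∧ u b = 0 ∧ (∃ x₀, u x₀ ≠ 0) ∧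
      ∀ z, u z = 0 → ∃ s t : ℝ, z = s • a + t • b := by
  classical
  have hne : Submodule.span ℝ {a, b} ≠ ⊤ := by
    intro htop
    have h1 : Module.finrank ℝ ↥(Submodule.span ℝ ({a, b} : Set (NR 3))) ≤
        ({a, b} : Set (NR 3)).toFinset.card := finrank_span_le_card _
    have h2 : ({a, b} : Set (NR 3)).toFinset.card ≤ 2 := by
      rw [Set.toFinset_insert, Set.toFinset_singleton]
      exact (Finset.card_insert_le _ _).trans (by simp)
    rw [htop, finrank_top] at h1
    have : Module.finrank ℝ (NR 3) = 3 := by simp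
    omega
  obtain ⟨w, hw⟩ : ∃ w, w ∉ Submodule.span ℝ ({a, b} : Set (NR 3)) := by
    by_contra hcon
    push_neg at hcon
    exact hne (Submodule.eq_top_iff'.2 hcon)
  have hind3 : LinearIndependent ℝ ![a, b, w] := by
    rw [Fintype.linearIndependent_iff]
    intro g hg
    have hg' : g 0 • a + g 1 • b + g 2 • w = 0 := by
      have := hg
      simpa [Fin.sum_univ_three] using this
    by_cases h2 : g 2 = 0
    · rw [h2, zero_smul, add_zero] at hg'
      have := LinearIndependent.pair_iff.1 hab (g 0) (g 1) hg'
      intro i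
      fin_cases i
      · exact this.1
      · exact this.2
      · exact h2
    · exfalso
      apply hw
      have hW : g 2 • w = (-(g 0)) • a + (-(g 1)) • b := by
        have hstep : g 2 • w = -(g 0 • a + g 1 • b) := by
          rw [eq_neg_iff_add_eq_zero, ← hg']
          module
        rw [hstep]
        module
      have hw2 : w = ((g 2)⁻¹ * (-(g 0))) • a + ((g 2)⁻¹ * (-(g 1))) • b := by
        have hcongr := congrArg (fun v => (g 2)⁻¹ • v) hW
        simp only [smul_smul, smul_add] at hcongr
        rwa [inv_mul_cancel₀ h2, one_smul] at hcongr
      rw [Submodule.mem_span_pair]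
      exact ⟨_, _, hw2.symm⟩
  set B3 : Module.Basis (Fin 3) ℝ (NR 3) :=
    basisOfLinearIndependentOfCardEqFinrank hind3 (by simp) with hB3def
  have hB3 : ∀ j, B3 j = ![a, b, w] j := fun j =>
    congrFun (coe_basisOfLinearIndependentOfCardEqFinrank hind3 (by simp)) j
  refine ⟨B3.coord 2, ?_, ?_, ⟨w, ?_⟩, ?_⟩
  · have : a = B3 0 := by rw [hB3 0]; rfl
    rw [this, Module.Basis.coord_apply, Module.Basis.repr_self_apply]
    simp
  · have : b = B3 1 := by rw [hB3 1]; rfl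
    rw [this, Module.Basis.coord_apply, Module.Basis.repr_self_apply]
    simp
  · have : w = B3 2 := by rw [hB3 2]; rfl
    rw [this, Module.Basis.coord_apply, Module.Basis.repr_self_apply]
    simp
  · intro z hz
    have hzrep : z = B3.repr z 0 • B3 0 + B3.repr z 1 • B3 1 + B3.repr z 2 • B3 2 := by
      have := B3.sum_repr z
      rw [Fin.sum_univ_three] at this
      exact this.symm
    rw [Module.Basis.coord_apply] at hz
    rw [hz, zero_smul, add_zero] at hzrep
    refine ⟨B3.repr z 0, B3.repr z 1, ?_⟩
    have ha0 : B3 0 = a := by rw [hB3 0]; rfl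
    have hb1 : B3 1 = b := by rw [hB3 1]; rfl
    conv_lhs => rw [hzrep]
    rw [ha0, hb1]

-- § M1: the core crossing configuration
namespace Fan

lemma m1 {d : ℕ} (F : Fan d)
    (Hpair : ∀ a b : Fin d → ℤ, a ∈ F.genSet → b ∈ F.genSet → a ≠ b →
      coneOf {toNR a, toNR b} ∈ F.cones)
    {A B C D E : Fin d → ℤ} (hB : B ∈ F.genSet) (hC : C ∈ F.genSet) (hD : D ∈ F.genSet)
    (hE : E ∈ F.genSet) (hBC : B ≠ C) (hED : E ≠ D) (hEB : E ≠ B) (hEC : E ≠ C)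
    (hDB : D ≠ B) (hDC : D ≠ C) {lA lB lC lD : ℝ} (hlA : 0 < lA) (hlD : 0 < lD)
    (hrel : lA • toNR A + lB • toNR B + lC • toNR C + lD • toNR D = 0)
    {a b c : ℝ} (ha : 0 ≤ a) (hb : 0 ≤ b) (hc : 0 ≤ c)
    (hEeq : toNR E = a • toNR A + b • toNR B + c • toNR C)
    (h1 : a * lB ≤ b * lA) (h2 : a * lC ≤ c * lA) : False := by
  have hD4 : lD • toNR D = -(lA • toNR A + lB • toNR B + lC • toNR C) :=
    eq_neg_of_add_eq_zero_right hrel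
  set z : NR d := (lA * b - a * lB) • toNR B + (lA * c - a * lC) • toNR C with hzdef
  have hz2 : lA • toNR E + (a * lD) • toNR D = z := by
    calc lA • toNR E + (a * lD) • toNR D
        = lA • (a • toNR A + b • toNR B + c • toNR C) + a • (lD • toNR D) := by
          rw [hEeq]; module
      _ = lA • (a • toNR A + b • toNR B + c • toNR C) +
            a • (-(lA • toNR A + lB • toNR B + lC • toNR C)) := by rw [hD4]
      _ = z := by rw [hzdef]; module
  have hzED : z ∈ coneOf {toNR E, toNR D} := by
    rw [← hz2]
    exact pair_mem_coneOf hlA.le (mul_nonneg ha hlD.le)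
  have hzBC : z ∈ coneOf {toNR B, toNR C} := by
    rw [hzdef]
    exact pair_mem_coneOf (by linarith) (by linarith)
  by_cases hz0 : z = 0
  · have hCED : coneOf {toNR E, toNR D} ∈ F.cones := Hpair E D hE hD hED
    have hx : lA • toNR E ∈ coneOf {toNR E, toNR D} :=
      smul_mem_coneOf_of_mem hlA.le (by simp)
    have hadd : lA • toNR E + (a * lD) • toNR D = 0 := by rw [hz2, hz0]
    have hnx : -(lA • toNR E) ∈ coneOf {toNR E, toNR D} := by
      rw [neg_eq_of_add_eq_zero_right hadd]
      exact smul_mem_coneOf_of_mem (mul_nonneg ha hlD.le) (by simp)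
    have h0 := F.pointed _ hCED _ hx hnx
    have hE0 : toNR E = 0 := (smul_eq_zero.1 h0).resolve_left hlA.ne'
    exact hE.1.ne_zero' hE0
  · exact F.crossing hE hD hB hC (Hpair E D hE hD hED) (Hpair B C hB hC hBC)
      hEB hEC hDB hDC hzED hzBC hz0

end Fan
namespace Fan

lemma pointed_pair_zero {d : ℕ} (F : Fan d)
    (Hpair : ∀ a b : Fin d → ℤ, a ∈ F.genSet → b ∈ F.genSet → a ≠ b →
      coneOf {toNR a, toNR b} ∈ F.cones)
    {p q : Fin d → ℤ} (hp : p ∈ F.genSet) (hq : q ∈ F.genSet) (hpq : p ≠ q) {α β : ℝ}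
    (hα : 0 < α) (hβ : 0 ≤ β) (h0 : α • toNR p + β • toNR q = 0) : False := by
  have hCc := Hpair p q hp hq hpq
  have hx : α • toNR p ∈ coneOf {toNR p, toNR q} :=
    smul_mem_coneOf_of_mem hα.le (by simp)
  have hnx : -(α • toNR p) ∈ coneOf {toNR p, toNR q} := by
    rw [neg_eq_of_add_eq_zero_right h0]
    exact smul_mem_coneOf_of_mem hβ (by simp)
  have := F.pointed _ hCc _ hx hnx
  exact hp.1.ne_zero' ((smul_eq_zero.1 this).resolve_left hα.ne')

/-- The quadrilateral configuration: 4 generators in positive linear relation plus a fifth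
generator in the cone of the first three leads to a contradiction. -/
lemma mquad {d : ℕ} (F : Fan d)
    (Hpair : ∀ a b : Fin d → ℤ, a ∈ F.genSet → b ∈ F.genSet → a ≠ b →
      coneOf {toNR a, toNR b} ∈ F.cones)
    {P1 P2 P3 P4 E : Fin d → ℤ} (h1 : P1 ∈ F.genSet) (h2 : P2 ∈ F.genSet)
    (h3 : P3 ∈ F.genSet) (h4 : P4 ∈ F.genSet) (hE : E ∈ F.genSet)
    (h12 : P1 ≠ P2) (h13 : P1 ≠ P3) (h23 : P2 ≠ P3) (h14 : P1 ≠ P4) (h24 : P2 ≠ P4)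
    (h34 : P3 ≠ P4) (hE1 : E ≠ P1) (hE2 : E ≠ P2) (hE3 : E ≠ P3) (hE4 : E ≠ P4)
    {l1 l2 l3 l4 : ℝ} (hl1 : 0 < l1) (hl2 : 0 < l2) (hl3 : 0 < l3) (hl4 : 0 < l4)
    (hrel : l1 • toNR P1 + l2 • toNR P2 + l3 • toNR P3 + l4 • toNR P4 = 0)
    {a1 a2 a3 : ℝ} (ha1 : 0 ≤ a1) (ha2 : 0 ≤ a2) (ha3 : 0 ≤ a3)
    (hEeq : toNR E = a1 • toNR P1 + a2 • toNR P2 + a3 • toNR P3) : False := by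
  rcases le_total (a1 * l2) (a2 * l1) with h12' | h21'
  · rcases le_total (a1 * l3) (a3 * l1) with h13' | h31'
    · exact F.m1 Hpair h2 h3 h4 hE h23 hE4 hE2 hE3 h24.symm h34.symm hl1 hl4 hrel
        ha1 ha2 ha3 hEeq h12' h13'
    · have hrel' : l3 • toNR P3 + l1 • toNR P1 + l2 • toNR P2 + l4 • toNR P4 = 0 := by
        rw [← hrel]; module
      have hEeq' : toNR E = a3 • toNR P3 + a1 • toNR P1 + a2 • toNR P2 := by
        rw [hEeq]; module
      have hm2 : a3 * l2 ≤ a2 * l3 := by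
        nlinarith [mul_le_mul_of_nonneg_right h31' hl2.le,
          mul_le_mul_of_nonneg_right h12' hl3.le]
      exact F.m1 Hpair h1 h2 h4 hE h12 hE4 hE1 hE2 h14.symm h24.symm hl3 hl4 hrel'
        ha3 ha1 ha2 hEeq' h31' hm2
  · rcases le_total (a2 * l3) (a3 * l2) with h23' | h32'
    · have hrel' : l2 • toNR P2 + l1 • toNR P1 + l3 • toNR P3 + l4 • toNR P4 = 0 := by
        rw [← hrel]; module
      have hEeq' : toNR E = a2 • toNR P2 + a1 • toNR P1 + a3 • toNR P3 := by
        rw [hEeq]; module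
      exact F.m1 Hpair h1 h3 h4 hE h13 hE4 hE1 hE3 h14.symm h34.symm hl2 hl4 hrel'
        ha2 ha1 ha3 hEeq' h21' h23'
    · have hrel' : l3 • toNR P3 + l1 • toNR P1 + l2 • toNR P2 + l4 • toNR P4 = 0 := by
        rw [← hrel]; module
      have hEeq' : toNR E = a3 • toNR P3 + a1 • toNR P1 + a2 • toNR P2 := by
        rw [hEeq]; module
      have hm1 : a3 * l1 ≤ a1 * l3 := by
        nlinarith [mul_le_mul_of_nonneg_right h32' hl1.le,
          mul_le_mul_of_nonneg_right h21' hl3.le]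
      exact F.m1 Hpair h1 h2 h4 hE h12 hE4 hE1 hE2 h14.symm h24.symm hl3 hl4 hrel'
        ha3 ha1 ha2 hEeq' hm1 h32'

/-- Two distinct generators of a fan with all pair cones have independent hats. -/
lemma pair_indep {d : ℕ} (F : Fan d)
    (Hpair : ∀ a b : Fin d → ℤ, a ∈ F.genSet → b ∈ F.genSet → a ≠ b →
      coneOf {toNR a, toNR b} ∈ F.cones)
    {A B : Fin d → ℤ} (hA : A ∈ F.genSet) (hB : B ∈ F.genSet) (hAB : A ≠ B) :
    LinearIndependent ℝ ![toNR A, toNR B] := by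
  rw [LinearIndependent.pair_iff]
  intro s t hst
  by_contra hcon
  have hA0 : toNR A ≠ 0 := hA.1.ne_zero'
  have hB0 : toNR B ≠ 0 := hB.1.ne_zero'
  have hs : s ≠ 0 ∨ t ≠ 0 := by tauto
  have hprop : ∃ μ : ℝ, toNR B = μ • toNR A ∨ toNR A = μ • toNR B := by
    rcases hs with h | h
    · refine ⟨-t / s, ?_⟩
      right
      have hstep : s • toNR A = (-t) • toNR B := by
        rw [neg_smul, eq_neg_iff_add_eq_zero]
        exact hst
      have hcongr := congrArg (fun v => s⁻¹ • v) hstep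
      simp only [smul_smul] at hcongr
      rw [inv_mul_cancel₀ h, one_smul] at hcongr
      rw [hcongr]
      congr 1
      field_simp
    · refine ⟨-s / t, ?_⟩
      left
      have hstep : t • toNR B = (-s) • toNR A := by
        rw [neg_smul, eq_neg_iff_add_eq_zero]
        rw [add_comm]
        exact hst
      have hcongr := congrArg (fun v => t⁻¹ • v) hstep
      simp only [smul_smul] at hcongr
      rw [inv_mul_cancel₀ h, one_smul] at hcongr
      rw [hcongr]
      congr 1
      field_simp
  obtain ⟨μ, hμ | hμ⟩ := hprop
  · rcases lt_trichotomy μ 0 with hμ0 | hμ0 | hμ0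
    · refine F.pointed_pair_zero Hpair hA hB hAB (α := 1) (β := -μ⁻¹) one_pos
        (le_of_lt (neg_pos.2 (inv_lt_zero.2 hμ0))) ?_
      rw [one_smul, hμ, smul_smul, neg_mul, inv_mul_cancel₀ hμ0.ne, neg_smul, one_smul,
        add_neg_cancel]
    · rw [hμ0, zero_smul] at hμ; exact hB0 hμ
    · exact hAB ((prim_eq_of_pos_smul hA.1 hB.1 hμ0 hμ).symm)
  · rcases lt_trichotomy μ 0 with hμ0 | hμ0 | hμ0
    · refine F.pointed_pair_zero Hpair hB hA (Ne.symm hAB) (α := 1) (β := -μ⁻¹) one_pos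
        (le_of_lt (neg_pos.2 (inv_lt_zero.2 hμ0))) ?_
      rw [one_smul, hμ, smul_smul, neg_mul, inv_mul_cancel₀ hμ0.ne, neg_smul, one_smul,
        add_neg_cancel]
    · rw [hμ0, zero_smul] at hμ; exact hA0 hμ
    · exact hAB (prim_eq_of_pos_smul hB.1 hA.1 hμ0 hμ)

/-- The coplanar (three-term relation) case. -/
lemma case3 (F : Fan 3) (hco : F.IsComplete) (hno : F.IsNonsingular)
    (Hpair : ∀ a b : Fin 3 → ℤ, a ∈ F.genSet → b ∈ F.genSet → a ≠ b →
      coneOf {toNR a, toNR b} ∈ F.cones)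
    {A B C : Fin 3 → ℤ} (hA : A ∈ F.genSet) (hB : B ∈ F.genSet) (hC : C ∈ F.genSet)
    (hAB : A ≠ B) (hAC : A ≠ C) (hBC : B ≠ C)
    {l1 l2 l3 : ℝ} (hl1 : 0 < l1) (hl2 : 0 < l2) (hl3 : 0 < l3)
    (hrel : l1 • toNR A + l2 • toNR B + l3 • toNR C = 0) : False := by
  have hindAB : LinearIndependent ℝ ![toNR A, toNR B] := F.pair_indep Hpair hA hB hAB
  obtain ⟨u, huA, huB, ⟨x₀, hx₀⟩, hker⟩ := exists_ker_functional hindAB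
  have huC : u (toNR C) = 0 := by
    have h0 : u (l1 • toNR A + l2 • toNR B + l3 • toNR C) = 0 := by rw [hrel, map_zero]
    rw [map_add, map_add, map_smul, map_smul, map_smul, huA, huB] at h0
    simp only [smul_eq_mul, mul_zero, zero_add] at h0
    exact (mul_eq_zero.1 h0).resolve_left hl3.ne'
  have hsign : ∀ (v : NR 3 →ₗ[ℝ] ℝ) (y : NR 3), 0 < v y →
      ∃ p ∈ F.genSet, 0 < v (toNR p) := by
    intro v y hy
    obtain ⟨s, c, hsub, hc, hyeq⟩ := F.gen_rep hco hno y
    have hvy : v y = ∑ g ∈ s, c g * v (toNR g) := by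
      rw [hyeq, map_sum]
      exact Finset.sum_congr rfl fun g _ => by rw [map_smul, smul_eq_mul]
    have hlt : ∑ _g ∈ s, (0:ℝ) < ∑ g ∈ s, c g * v (toNR g) := by
      rw [Finset.sum_const, smul_zero, ← hvy]
      exact hy
    obtain ⟨g, hg, hg2⟩ := Finset.exists_lt_of_sum_lt hlt
    refine ⟨g, hsub hg, ?_⟩
    nlinarith [hc g, hg2]
  obtain ⟨p, hp, hup⟩ : ∃ p ∈ F.genSet, 0 < u (toNR p) := by
    rcases lt_trichotomy (u x₀) 0 with h | h | h
    · exact hsign u (-x₀) (by rw [map_neg]; linarith)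
    · exact absurd h hx₀
    · exact hsign u x₀ h
  obtain ⟨q, hq, huq⟩ : ∃ q ∈ F.genSet, u (toNR q) < 0 := by
    obtain ⟨q, hq, h2⟩ : ∃ q ∈ F.genSet, 0 < (-u) (toNR q) := by
      rcases lt_trichotomy (u x₀) 0 with h | h | h
      · exact hsign (-u) x₀ (by simp only [LinearMap.neg_apply]; linarith)
      · exact absurd h hx₀
      · exact hsign (-u) (-x₀) (by simp only [LinearMap.neg_apply, map_neg]; linarith)
    refine ⟨q, hq, ?_⟩
    simp only [LinearMap.neg_apply] at h2
    linarith
  have hpq : p ≠ q := by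
    rintro rfl
    linarith
  have hpA : p ≠ A := by rintro rfl; rw [huA] at hup; exact lt_irrefl _ hup
  have hpB : p ≠ B := by rintro rfl; rw [huB] at hup; exact lt_irrefl _ hup
  have hpC : p ≠ C := by rintro rfl; rw [huC] at hup; exact lt_irrefl _ hup
  have hqA : q ≠ A := by rintro rfl; rw [huA] at huq; exact lt_irrefl _ huq
  have hqB : q ≠ B := by rintro rfl; rw [huB] at huq; exact lt_irrefl _ huq
  have hqC : q ≠ C := by rintro rfl; rw [huC] at huq; exact lt_irrefl _ huq
  set α : ℝ := -(u (toNR q)) with hαdef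
  set β : ℝ := u (toNR p) with hβdef
  have hα : 0 < α := by rw [hαdef]; linarith
  have hβ : 0 < β := hup
  set z : NR 3 := α • toNR p + β • toNR q with hzdef
  have hz_pq : z ∈ coneOf {toNR p, toNR q} := pair_mem_coneOf hα.le hβ.le
  have huz : u z = 0 := by
    rw [hzdef, map_add, map_smul, map_smul, smul_eq_mul, smul_eq_mul, hαdef, hβdef]
    ring
  obtain ⟨s, t, hzst⟩ := hker z huz
  have hznz : z ≠ 0 := fun h0 =>
    F.pointed_pair_zero Hpair hp hq hpq hα hβ.le (hzdef ▸ h0)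
  rcases le_total (s * l2) (t * l1) with hst1 | hst2
  · by_cases hs0 : 0 ≤ s
    · have ht0 : 0 ≤ t := by nlinarith
      have hzAB : z ∈ coneOf {toNR A, toNR B} := by
        rw [hzst]; exact pair_mem_coneOf hs0 ht0
      exact F.crossing hp hq hA hB (Hpair p q hp hq hpq) (Hpair A B hA hB hAB)
        hpA hpB hqA hqB hz_pq hzAB hznz
    · push_neg at hs0
      set r : ℝ := -s / l1 with hrdef
      have hrpos : 0 < r := div_pos (by linarith) hl1
      have hkey : t + r * l2 = (t * l1 - s * l2) / l1 := by
        rw [hrdef]; field_simp; ring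
      have hcoeff2 : 0 ≤ t + r * l2 := by
        rw [hkey]; exact div_nonneg (by linarith) hl1.le
      have hs_cancel : s + r * l1 = 0 := by rw [hrdef, div_mul_cancel₀ _ hl1.ne']; ring
      have hz_eq : z = (t + r * l2) • toNR B + (r * l3) • toNR C := by
        calc z = s • toNR A + t • toNR B := hzst
          _ = (s + r*l1) • toNR A + (t + r*l2) • toNR B + (r*l3) • toNR C
              - r • (l1 • toNR A + l2 • toNR B + l3 • toNR C) := by module
          _ = (s + r*l1) • toNR A + (t + r*l2) • toNR B + (r*l3) • toNR C := by
              rw [hrel, smul_zero, sub_zero]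
          _ = (t + r*l2) • toNR B + (r*l3) • toNR C := by
              rw [hs_cancel, zero_smul, zero_add]
      have hzBC : z ∈ coneOf {toNR B, toNR C} := by
        rw [hz_eq]; exact pair_mem_coneOf hcoeff2 (mul_nonneg hrpos.le hl3.le)
      exact F.crossing hp hq hB hC (Hpair p q hp hq hpq) (Hpair B C hB hC hBC)
        hpB hpC hqB hqC hz_pq hzBC hznz
  · by_cases ht0 : 0 ≤ t
    · have hs0 : 0 ≤ s := by nlinarith
      have hzAB : z ∈ coneOf {toNR A, toNR B} := by
        rw [hzst]; exact pair_mem_coneOf hs0 ht0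
      exact F.crossing hp hq hA hB (Hpair p q hp hq hpq) (Hpair A B hA hB hAB)
        hpA hpB hqA hqB hz_pq hzAB hznz
    · push_neg at ht0
      set r : ℝ := -t / l2 with hrdef
      have hrpos : 0 < r := div_pos (by linarith) hl2
      have hkey : s + r * l1 = (s * l2 - t * l1) / l2 := by
        rw [hrdef]; field_simp; ring
      have hcoeff1 : 0 ≤ s + r * l1 := by
        rw [hkey]; exact div_nonneg (by linarith) hl2.le
      have ht_cancel : t + r * l2 = 0 := by rw [hrdef, div_mul_cancel₀ _ hl2.ne']; ring
      have hz_eq : z = (s + r * l1) • toNR A + (r * l3) • toNR C := by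
        calc z = s • toNR A + t • toNR B := hzst
          _ = (s + r*l1) • toNR A + (t + r*l2) • toNR B + (r*l3) • toNR C
              - r • (l1 • toNR A + l2 • toNR B + l3 • toNR C) := by module
          _ = (s + r*l1) • toNR A + (t + r*l2) • toNR B + (r*l3) • toNR C := by
              rw [hrel, smul_zero, sub_zero]
          _ = (s + r*l1) • toNR A + (r*l3) • toNR C := by
              rw [ht_cancel, zero_smul, add_zero]
      have hzAC : z ∈ coneOf {toNR A, toNR C} := by
        rw [hz_eq]; exact pair_mem_coneOf hcoeff1 (mul_nonneg hrpos.le hl3.le)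
      exact F.crossing hp hq hA hC (Hpair p q hp hq hpq) (Hpair A C hA hC hAC)
        hpA hpC hqA hqC hz_pq hzAC hznz

end Fan
-- § triple independence from affine independence plus a positive relation
lemma triple_indep {v : Fin 4 → NR 3} (haff : AffineIndependent ℝ v) {l : Fin 4 → ℝ}
    (hl : ∀ i, 0 < l i)
    (hrel4 : l 0 • v 0 + l 1 • v 1 + l 2 • v 2 + l 3 • v 3 = 0) :
    LinearIndependent ℝ ![v 0, v 1, v 2] := by
  rw [Fintype.linearIndependent_iff]
  intro g hg
  have hg' : g 0 • v 0 + g 1 • v 1 + g 2 • v 2 = 0 := by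
    have := hg
    rw [Fin.sum_univ_three] at this
    simpa using this
  set Λ : ℝ := l 0 + l 1 + l 2 + l 3 with hΛ
  have hΛpos : 0 < Λ := by have := hl 0; have := hl 1; have := hl 2; have := hl 3; linarith
  set σs : ℝ := g 0 + g 1 + g 2 with hσ
  set κ : ℝ := σs / Λ with hκ
  have hκΛ : κ * Λ = σs := by rw [hκ]; field_simp
  set w : Fin 4 → ℝ := ![g 0 - κ * l 0, g 1 - κ * l 1, g 2 - κ * l 2, -(κ * l 3)] with hw
  have hw0 : w 0 = g 0 - κ * l 0 := by simp [hw]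
  have hw1 : w 1 = g 1 - κ * l 1 := by simp [hw]
  have hw2 : w 2 = g 2 - κ * l 2 := by simp [hw]
  have hw3 : w 3 = -(κ * l 3) := by simp [hw]
  have hκΛ' : κ * (l 0 + l 1 + l 2 + l 3) = g 0 + g 1 + g 2 := by
    rw [← hΛ, hκΛ, hσ]
  have hwsum : ∑ i, w i = 0 := by
    rw [Fin.sum_univ_four, hw0, hw1, hw2, hw3]
    ring_nf
    ring_nf at hκΛ'
    linarith [hκΛ']
  have hvsub : Finset.univ.weightedVSub v w = (0 : NR 3) := by
    rw [Finset.weightedVSub_eq_linear_combination _ hwsum]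
    have hexp : ∑ i, w i • v i =
        (g 0 • v 0 + g 1 • v 1 + g 2 • v 2) -
          κ • (l 0 • v 0 + l 1 • v 1 + l 2 • v 2 + l 3 • v 3) := by
      rw [Fin.sum_univ_four, hw0, hw1, hw2, hw3]
      module
    rw [hexp, hg', hrel4, smul_zero, sub_zero]
  have hww := (affineIndependent_iff_of_fintype ℝ v).1 haff w hwsum hvsub
  have he0 : g 0 - κ * l 0 = 0 := by rw [← hw0]; exact hww 0
  have he1 : g 1 - κ * l 1 = 0 := by rw [← hw1]; exact hww 1
  have he2 : g 2 - κ * l 2 = 0 := by rw [← hw2]; exact hww 2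
  have he3 : -(κ * l 3) = 0 := by rw [← hw3]; exact hww 3
  have hκ0 : κ = 0 := by
    have hl3 := hl 3
    rcases mul_eq_zero.1 (neg_eq_zero.1 he3) with h | h
    · exact h
    · exact absurd h hl3.ne'
  rw [hκ0] at he0 he1 he2
  intro i
  fin_cases i
  · simpa using he0
  · simpa using he1
  · simpa using he2

namespace Fan

/-- The spatial (four-term relation) case. -/
lemma case4 (F : Fan 3) {G : Finset (Fin 3 → ℤ)} (hG : (↑G : Set (Fin 3 → ℤ)) = F.genSet)
    (hρ : 5 ≤ G.card)
    (Hpair : ∀ a b : Fin 3 → ℤ, a ∈ F.genSet → b ∈ F.genSet → a ≠ b →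
      coneOf {toNR a, toNR b} ∈ F.cones)
    {g : Fin 4 → Fin 3 → ℤ} (hgG : ∀ i, g i ∈ F.genSet) (hginj : Function.Injective g)
    {l : Fin 4 → ℝ} (hl : ∀ i, 0 < l i) (hrel : ∑ i, l i • toNR (g i) = 0)
    (haff : AffineIndependent ℝ (fun i => toNR (g i))) : False := by
  classical
  set v : Fin 4 → NR 3 := fun i => toNR (g i) with hv
  have hrel4 : l 0 • v 0 + l 1 • v 1 + l 2 • v 2 + l 3 • v 3 = 0 := by
    rw [← hrel, Fin.sum_univ_four]
  -- a fifth generator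
  obtain ⟨E, hEG, hEnot⟩ : ∃ E ∈ G, E ∉ Finset.univ.image g := by
    by_contra hcon
    push_neg at hcon
    have hsub : G ⊆ Finset.univ.image g := fun x hx => hcon x hx
    have h1 : G.card ≤ (Finset.univ.image g).card := Finset.card_le_card hsub
    have h2 : (Finset.univ.image g).card ≤ 4 :=
      (Finset.card_image_le).trans (by simp)
    omega
  have hE : E ∈ F.genSet := by rw [← hG]; exact hEG
  have hEne : ∀ i, E ≠ g i := by
    intro i h
    exact hEnot (Finset.mem_image.2 ⟨i, Finset.mem_univ i, h.symm⟩)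
  have hgne : ∀ i j : Fin 4, i ≠ j → g i ≠ g j := fun i j hij => fun h => hij (hginj h)
  -- independence of the first three
  have hind : LinearIndependent ℝ ![v 0, v 1, v 2] := triple_indep haff hl hrel4
  set BR : Module.Basis (Fin 3) ℝ (NR 3) :=
    basisOfLinearIndependentOfCardEqFinrank hind (by simp) with hBRdef
  have hBR : ∀ j, BR j = ![v 0, v 1, v 2] j := fun j =>
    congrFun (coe_basisOfLinearIndependentOfCardEqFinrank hind (by simp)) j
  set x : Fin 3 → ℝ := fun j => BR.repr (toNR E) j with hx
  have hEexp : toNR E = x 0 • v 0 + x 1 • v 1 + x 2 • v 2 := by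
    have hs := BR.sum_repr (toNR E)
    rw [Fin.sum_univ_three] at hs
    have h0 : BR 0 = v 0 := by rw [hBR 0]; rfl
    have h1 : BR 1 = v 1 := by rw [hBR 1]; rfl
    have h2 : BR 2 = v 2 := by rw [hBR 2]; rfl
    rw [h0, h1, h2] at hs
    exact hs.symm
  by_cases hall : 0 ≤ x 0 ∧ 0 ≤ x 1 ∧ 0 ≤ x 2
  · exact F.mquad Hpair (hgG 0) (hgG 1) (hgG 2) (hgG 3) hE
      (hgne 0 1 (by decide)) (hgne 0 2 (by decide)) (hgne 1 2 (by decide))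
      (hgne 0 3 (by decide)) (hgne 1 3 (by decide)) (hgne 2 3 (by decide))
      (hEne 0) (hEne 1) (hEne 2) (hEne 3) (hl 0) (hl 1) (hl 2) (hl 3) hrel4
      hall.1 hall.2.1 hall.2.2 hEexp
  · set t : ℝ := max (max (-(x 0)/l 0) (-(x 1)/l 1)) (-(x 2)/l 2) with ht
    have hmax0 : -(x 0)/l 0 ≤ t := le_trans (le_max_left _ _) (le_max_left _ _)
    have hmax1 : -(x 1)/l 1 ≤ t := le_trans (le_max_right _ _) (le_max_left _ _)
    have hmax2 : -(x 2)/l 2 ≤ t := le_max_right _ _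
    have hc0 : 0 ≤ x 0 + t * l 0 := by
      have := (div_le_iff₀ (hl 0)).1 hmax0; linarith
    have hc1 : 0 ≤ x 1 + t * l 1 := by
      have := (div_le_iff₀ (hl 1)).1 hmax1; linarith
    have hc2 : 0 ≤ x 2 + t * l 2 := by
      have := (div_le_iff₀ (hl 2)).1 hmax2; linarith
    have ht0 : 0 ≤ t := by
      push_neg at hall
      rcases le_or_gt 0 (x 0) with h0 | h0
      · rcases le_or_gt 0 (x 1) with h1 | h1
        · have h2 : x 2 < 0 := by tauto
          have : 0 < -(x 2)/l 2 := div_pos (by linarith) (hl 2)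
          linarith [hmax2]
        · have : 0 < -(x 1)/l 1 := div_pos (by linarith) (hl 1)
          linarith [hmax1]
      · have : 0 < -(x 0)/l 0 := div_pos (by linarith) (hl 0)
        linarith [hmax0]
    have hEshift : toNR E = (x 0 + t*l 0) • v 0 + (x 1 + t*l 1) • v 1 +
        (x 2 + t*l 2) • v 2 + (t*l 3) • v 3 := by
      calc toNR E = (x 0 • v 0 + x 1 • v 1 + x 2 • v 2) +
          t • (l 0 • v 0 + l 1 • v 1 + l 2 • v 2 + l 3 • v 3) := by
            rw [hrel4, smul_zero, add_zero, hEexp]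
        _ = _ := by module
    have hattain : x 0 + t*l 0 = 0 ∨ x 1 + t*l 1 = 0 ∨ x 2 + t*l 2 = 0 := by
      rcases max_choice (max (-(x 0)/l 0) (-(x 1)/l 1)) (-(x 2)/l 2) with h | h
      · rcases max_choice (-(x 0)/l 0) (-(x 1)/l 1) with h' | h'
        · refine Or.inl ?_
          have htt : t = -(x 0)/l 0 := by rw [ht, h, h']
          rw [htt]
          field_simp [(hl 0).ne']
          try ring
        · refine Or.inr (Or.inl ?_)
          have htt : t = -(x 1)/l 1 := by rw [ht, h, h']
          rw [htt]
          field_simp [(hl 1).ne']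
          try ring
      · refine Or.inr (Or.inr ?_)
        have htt : t = -(x 2)/l 2 := by rw [ht, h]
        rw [htt]
        field_simp [(hl 2).ne']
        try ring
    have htl3 : 0 ≤ t * l 3 := mul_nonneg ht0 (hl 3).le
    rcases hattain with h | h | h
    · have hrel' : l 1 • v 1 + l 2 • v 2 + l 3 • v 3 + l 0 • v 0 = 0 := by
        rw [← hrel4]; module
      have hEeq' : toNR E = (x 1 + t*l 1) • v 1 + (x 2 + t*l 2) • v 2 + (t*l 3) • v 3 := by
        rw [hEshift, h, zero_smul, zero_add]
      exact F.mquad Hpair (hgG 1) (hgG 2) (hgG 3) (hgG 0) hE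
        (hgne 1 2 (by decide)) (hgne 1 3 (by decide)) (hgne 2 3 (by decide))
        (hgne 1 0 (by decide)) (hgne 2 0 (by decide)) (hgne 3 0 (by decide))
        (hEne 1) (hEne 2) (hEne 3) (hEne 0) (hl 1) (hl 2) (hl 3) (hl 0) hrel'
        hc1 hc2 htl3 hEeq'
    · have hrel' : l 0 • v 0 + l 2 • v 2 + l 3 • v 3 + l 1 • v 1 = 0 := by
        rw [← hrel4]; module
      have hEeq' : toNR E = (x 0 + t*l 0) • v 0 + (x 2 + t*l 2) • v 2 + (t*l 3) • v 3 := by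
        rw [hEshift, h, zero_smul, add_zero]
      exact F.mquad Hpair (hgG 0) (hgG 2) (hgG 3) (hgG 1) hE
        (hgne 0 2 (by decide)) (hgne 0 3 (by decide)) (hgne 2 3 (by decide))
        (hgne 0 1 (by decide)) (hgne 2 1 (by decide)) (hgne 3 1 (by decide))
        (hEne 0) (hEne 2) (hEne 3) (hEne 1) (hl 0) (hl 2) (hl 3) (hl 1) hrel'
        hc0 hc2 htl3 hEeq'
    · have hrel' : l 0 • v 0 + l 1 • v 1 + l 3 • v 3 + l 2 • v 2 = 0 := by
        rw [← hrel4]; module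
      have hEeq' : toNR E = (x 0 + t*l 0) • v 0 + (x 1 + t*l 1) • v 1 + (t*l 3) • v 3 := by
        rw [hEshift, h, zero_smul, add_zero]
      exact F.mquad Hpair (hgG 0) (hgG 1) (hgG 3) (hgG 2) hE
        (hgne 0 1 (by decide)) (hgne 0 3 (by decide)) (hgne 1 3 (by decide))
        (hgne 0 2 (by decide)) (hgne 1 2 (by decide)) (hgne 3 2 (by decide))
        (hEne 0) (hEne 1) (hEne 3) (hEne 2) (hl 0) (hl 1) (hl 3) (hl 2) hrel'
        hc0 hc1 htl3 hEeq'

end Fan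
/-- A Fano fan of rank 3 with Picard number at least 2 has a primitive
collection of cardinality 2. -/
theorem exists_card_two_primitiveCollection_dim3 (F : Fan 3) (hF : F.IsFanoFan)
    (G : Finset (Fin 3 → ℤ)) (hG : (↑G : Set (Fin 3 → ℤ)) = F.genSet)
    (hρ : 5 ≤ G.card) :
    ∃ P : Finset (Fin 3 → ℤ), F.IsPrimitiveCollection P ∧ P.card = 2 := by
  classical
  by_contra hcon
  push_neg at hcon
  have hmemG : ∀ {g : Fin 3 → ℤ}, g ∈ G → g ∈ F.genSet := fun {g} hg => by
    rw [← hG]; exact hg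
  -- Step 1: all pairs of distinct generators span cones of the fan
  have Hpair : ∀ a b : Fin 3 → ℤ, a ∈ F.genSet → b ∈ F.genSet → a ≠ b →
      coneOf {toNR a, toNR b} ∈ F.cones := by
    intro a b ha hb hab
    by_contra hC
    have himg : toNR '' (↑({a, b} : Finset (Fin 3 → ℤ)) : Set (Fin 3 → ℤ)) =
        {toNR a, toNR b} := by
      rw [Finset.coe_insert, Finset.coe_singleton, Set.image_insert_eq, Set.image_singleton]
    have hPC : F.IsPrimitiveCollection {a, b} := by
      refine ⟨⟨a, by simp⟩, ?_, ?_, ?_⟩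
      · intro x hx
        rw [Finset.coe_insert, Finset.coe_singleton] at hx
        rcases hx with rfl | rfl
        · exact ha
        · exact hb
      · rw [himg]; exact hC
      · intro x hx
        rcases Finset.mem_insert.1 hx with rfl | hx'
        · have hset : (↑({x, b} : Finset (Fin 3 → ℤ)) : Set (Fin 3 → ℤ)) \ {x} = {b} := by
            ext y
            simp only [Finset.coe_insert, Finset.coe_singleton, Set.mem_diff,
              Set.mem_insert_iff, Set.mem_singleton_iff]
            constructor
            · rintro ⟨rfl | rfl, h2⟩
              · exact absurd rfl h2
              · rfl
            · rintro rfl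
              exact ⟨Or.inr rfl, fun h => hab h.symm⟩
          rw [hset, Set.image_singleton]
          exact hb.2
        · rw [Finset.mem_singleton] at hx'
          subst hx'
          have hset : (↑({a, x} : Finset (Fin 3 → ℤ)) : Set (Fin 3 → ℤ)) \ {x} = {a} := by
            ext y
            simp only [Finset.coe_insert, Finset.coe_singleton, Set.mem_diff,
              Set.mem_insert_iff, Set.mem_singleton_iff]
            constructor
            · rintro ⟨rfl | rfl, h2⟩
              · rfl
              · exact absurd rfl h2
            · rintro rfl
              exact ⟨Or.inl rfl, hab⟩
          rw [hset, Set.image_singleton]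
          exact ha.2
    have hcard : ({a, b} : Finset (Fin 3 → ℤ)).card = 2 := by
      rw [Finset.card_insert_of_notMem (by simpa using hab), Finset.card_singleton]
    exact hcon _ hPC hcard
  have hco := hF.1
  have hno := hF.2.1
  -- Step 2: 0 lies in the convex hull of the generators
  set V : Set (NR 3) := toNR '' (↑G : Set (Fin 3 → ℤ)) with hV
  have hVfin : V.Finite := (G.finite_toSet).image _
  have h0hull : (0 : NR 3) ∈ convexHull ℝ V := by
    by_contra h0
    obtain ⟨f, u0, hf0, hflt⟩ := geometric_hahn_banach_point_closed
      (convex_convexHull ℝ V) ((hVfin.isCompact_convexHull (𝕜 := ℝ)).isClosed) h0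
    have hu0pos : 0 < u0 := by simpa using hf0
    obtain ⟨g0, hg0⟩ : ∃ g0, g0 ∈ G := by
      have : 0 < G.card := by omega
      exact Finset.card_pos.1 this
    obtain ⟨s, c, hsub, hc, heq⟩ := F.gen_rep hco hno (-(toNR g0))
    have hfneg : f (-(toNR g0)) = ∑ g ∈ s, c g * f (toNR g) := by
      rw [heq, map_sum]
      exact Finset.sum_congr rfl fun g _ => by rw [map_smul, smul_eq_mul]
    have hterm : ∀ g ∈ s, 0 ≤ c g * f (toNR g) := by
      intro g hgs
      have hgG : g ∈ G := by
        have := hsub hgs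
        rwa [← hG] at this
      have hmem : toNR g ∈ convexHull ℝ V := subset_convexHull ℝ V ⟨g, hgG, rfl⟩
      have := hflt _ hmem
      exact mul_nonneg (hc g) (by linarith)
    have h1 : 0 ≤ f (-(toNR g0)) := hfneg ▸ Finset.sum_nonneg hterm
    rw [map_neg] at h1
    have hmem0 : toNR g0 ∈ convexHull ℝ V := subset_convexHull ℝ V ⟨g0, hg0, rfl⟩
    have := hflt _ hmem0
    linarith
  -- Step 3: Caratheodory
  rw [convexHull_eq_union] at h0hull
  obtain ⟨t, ht⟩ := Set.mem_iUnion.1 h0hull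
  obtain ⟨hts, ht⟩ := Set.mem_iUnion.1 ht
  obtain ⟨hait, h0t⟩ := Set.mem_iUnion.1 ht
  obtain ⟨w, hw0, hwsum, hwc⟩ := Finset.mem_convexHull.1 h0t
  rw [Finset.centerMass_eq_of_sum_1 _ _ hwsum] at hwc
  simp only [id] at hwc
  set t₁ : Finset (NR 3) := t.filter (fun y => w y ≠ 0) with ht₁
  have ht₁sub : t₁ ⊆ t := Finset.filter_subset _ _
  have hwsum1 : ∑ y ∈ t₁, w y = 1 := by
    rw [ht₁, Finset.sum_filter_ne_zero]; exact hwsum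
  have hwc1 : ∑ y ∈ t₁, w y • y = 0 := by
    rw [ht₁, Finset.sum_filter_of_ne (fun x _ hxne => by
      intro hwx
      apply hxne
      rw [hwx, zero_smul])]
    exact hwc
  have hwpos : ∀ y ∈ t₁, 0 < w y := fun y hy =>
    lt_of_le_of_ne (hw0 y (ht₁sub hy)) (Ne.symm (Finset.mem_filter.1 hy).2)
  have hne : t₁.Nonempty := by
    by_contra h
    rw [Finset.not_nonempty_iff_eq_empty] at h
    rw [h, Finset.sum_empty] at hwsum1
    norm_num at hwsum1
  have hait₁ : AffineIndependent ℝ ((↑) : {x // x ∈ t₁} → NR 3) := by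
    have h := hait.comp_embedding
      (⟨fun x => ⟨x.1, Finset.mem_coe.2 (ht₁sub x.2)⟩,
        fun x y hxy => Subtype.ext
          (congrArg (fun z : {x : NR 3 // x ∈ (↑t : Set (NR 3))} => z.1) hxy)⟩ :
        {x // x ∈ t₁} ↪ {x : NR 3 // x ∈ (↑t : Set (NR 3))})
    exact h
  have hd : ∀ k : ℕ, t₁.card = k → ∃ (vv : Fin k → NR 3) (gg : Fin k → (Fin 3 → ℤ)),
      Function.Injective gg ∧ (∀ i, gg i ∈ F.genSet) ∧ (∀ i, toNR (gg i) = vv i) ∧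
      AffineIndependent ℝ vv ∧ (∀ i, 0 < w (vv i)) ∧ ∑ i, w (vv i) • vv i = 0 := by
    intro k hk
    have e : Fin k ≃ {x // x ∈ t₁} := (t₁.equivFin.trans (finCongr hk)).symm
    set vv : Fin k → NR 3 := fun i => (e i : NR 3) with hvv
    have hvinj : Function.Injective vv := by
      intro i j h
      exact e.injective (Subtype.ext h)
    have hvaff : AffineIndependent ℝ vv := hait₁.comp_embedding e.toEmbedding
    have hvmem : ∀ i, vv i ∈ t₁ := fun i => (e i).2
    have hlat : ∀ i : Fin k, ∃ g, g ∈ G ∧ toNR g = vv i := by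
      intro i
      have hmem : vv i ∈ V := hts (Finset.mem_coe.2 (ht₁sub (hvmem i)))
      obtain ⟨g, hg, hgeq⟩ := hmem
      exact ⟨g, hg, hgeq⟩
    choose gg hggG hggeq using hlat
    have hgginj : Function.Injective gg := by
      intro i j h
      apply hvinj
      rw [← hggeq i, ← hggeq j, h]
    refine ⟨vv, gg, hgginj, fun i => hmemG (hggG i), hggeq, hvaff, fun i => hwpos _ (hvmem i), ?_⟩
    rw [← hwc1, ← Finset.sum_coe_sort t₁ (fun y => w y • y)]
    exact Equiv.sum_comp e (fun x : {x // x ∈ t₁} => w (x : NR 3) • (x : NR 3))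
  have hn4 : t₁.card ≤ 4 := by
    by_contra h
    push_neg at h
    obtain ⟨vv, gg, hgginj, hggGen, hggeq, hvaff, hwposv, hrel⟩ := hd t₁.card rfl
    have hi0 : (0 : ℕ) < t₁.card := by omega
    have hli := (affineIndependent_iff_linearIndependent_vsub ℝ vv ⟨0, hi0⟩).1 hvaff
    have hcard := hli.fintype_card_le_finrank
    have hcompl : Fintype.card {i : Fin t₁.card // i ≠ (⟨0, hi0⟩ : Fin t₁.card)} =
        t₁.card - 1 := by
      rw [Fintype.card_subtype_compl, Fintype.card_subtype_eq, Fintype.card_fin]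
    rw [hcompl] at hcard
    have hfr : Module.finrank ℝ (NR 3) = 3 := by simp
    rw [hfr] at hcard
    omega
  obtain ⟨k, hk⟩ : ∃ k, t₁.card = k := ⟨_, rfl⟩
  have hk1 : 1 ≤ k := hk ▸ Finset.card_pos.2 hne
  have hk4 : k ≤ 4 := hk ▸ hn4
  interval_cases k
  · -- k = 1
    obtain ⟨vv, gg, hgginj, hggGen, hggeq, hvaff, hwposv, hrel⟩ := hd 1 hk
    have h1 : w (vv 0) • vv 0 = 0 := by
      rw [← hrel, Fin.sum_univ_one]
    have hv0 : vv 0 = 0 := (smul_eq_zero.1 h1).resolve_left (hwposv 0).ne'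
    rw [← hggeq 0] at hv0
    exact (hggGen 0).1.ne_zero' hv0
  · -- k = 2
    obtain ⟨vv, gg, hgginj, hggGen, hggeq, hvaff, hwposv, hrel⟩ := hd 2 hk
    have h2 : w (vv 0) • toNR (gg 0) + w (vv 1) • toNR (gg 1) = 0 := by
      rw [hggeq 0, hggeq 1, ← Fin.sum_univ_two (fun i => w (vv i) • vv i)]
      exact hrel
    exact F.pointed_pair_zero Hpair (hggGen 0) (hggGen 1)
      (hgginj.ne (by decide)) (hwposv 0) (hwposv 1).le h2
  · -- k = 3
    obtain ⟨vv, gg, hgginj, hggGen, hggeq, hvaff, hwposv, hrel⟩ := hd 3 hk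
    have h3 : w (vv 0) • toNR (gg 0) + w (vv 1) • toNR (gg 1) +
        w (vv 2) • toNR (gg 2) = 0 := by
      rw [hggeq 0, hggeq 1, hggeq 2, ← Fin.sum_univ_three (fun i => w (vv i) • vv i)]
      exact hrel
    exact F.case3 hco hno Hpair (hggGen 0) (hggGen 1) (hggGen 2)
      (hgginj.ne (by decide)) (hgginj.ne (by decide)) (hgginj.ne (by decide))
      (hwposv 0) (hwposv 1) (hwposv 2) h3
  · -- k = 4
    obtain ⟨vv, gg, hgginj, hggGen, hggeq, hvaff, hwposv, hrel⟩ := hd 4 hk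
    have hrel' : ∑ i : Fin 4, w (vv i) • toNR (gg i) = 0 := by
      rw [show (fun i : Fin 4 => w (vv i) • toNR (gg i)) =
        (fun i : Fin 4 => w (vv i) • vv i) from funext fun i => by rw [hggeq i]]
      exact hrel
    have haff' : AffineIndependent ℝ (fun i : Fin 4 => toNR (gg i)) := by
      rw [show (fun i : Fin 4 => toNR (gg i)) = vv from funext fun i => hggeq i]
      exact hvaff
    exact F.case4 hG hρ Hpair hggGen hgginj hwposv hrel' haff'
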